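/- Let θ be irrational and badly approximable with constant κ > 0 (|nθ−m| ≥ κ/n for all m ∈ ℤ, n ∈ ℕ₊), let m/n be a continued fraction convergent of θ, and define n-irregular indices as those j > n with γ(j) ≠ γ(j−n) (with γ as determined by the arcs (k/8,(k+1)/8)). Then any two distinct n-irregular indices j, j' satisfy |j − j'| > κn/128. -/

import Mathlib

open Complex

/-- The finite set Γ₀ = {-2, 2i, -2i, 1+2i, 1-2i}. -/
noncomputable def Gamma0 : Finset ℂ :=
  {-2, 2 * I, -2 * I, 1 + 2 * I, 1 - 2 * I}

/-- γ(j) is the element of Γ₀ maximizing Re(γ·e^{2πijθ}). -/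
def IsGammaSeq (θ : ℝ) (γ : ℕ → ℂ) : Prop :=
  ∀ j : ℕ, 1 ≤ j → γ j ∈ Gamma0 ∧
    ∀ γ' ∈ Gamma0, (γ' * Complex.exp (2 * Real.pi * θ * j * I)).re ≤
      (γ j * Complex.exp (2 * Real.pi * θ * j * I)).re

/-- The winner (unique maximizer) on the arc (r/8, (r+1)/8). -/
noncomputable def W : ℕ → ℂ := fun r =>
  if r ≤ 1 then 1 - 2*I else if r = 2 then -2*I else if r ≤ 4 then -2
  else if r = 5 then 2*I else 1 + 2*I

lemma W_mem (r : ℕ) : W r ∈ Gamma0 := by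
  unfold W Gamma0
  split_ifs <;> simp [Finset.mem_insert]

lemma sin_pos' {x : ℝ} (h1 : 0 < x) (h2 : x < Real.pi) : 0 < Real.sin x :=
  Real.sin_pos_of_pos_of_lt_pi h1 h2

lemma sin_neg' {x : ℝ} (h1 : Real.pi < x) (h2 : x < 2*Real.pi) : Real.sin x < 0 := by
  have : 0 < Real.sin (x - Real.pi) := sin_pos' (by linarith) (by linarith)
  rw [Real.sin_sub_pi] at this; linarith

lemma cos_neg' {x : ℝ} (h1 : Real.pi/2 < x) (h2 : x < 3*Real.pi/2) : Real.cos x < 0 :=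
  Real.cos_neg_of_pi_div_two_lt_of_lt h1 (by linarith)

lemma cos_pos' {x : ℝ} (h1 : -(Real.pi/2) < x) (h2 : x < Real.pi/2) : 0 < Real.cos x :=
  Real.cos_pos_of_mem_Ioo ⟨h1, h2⟩

lemma sin_add_cos (x : ℝ) : Real.sin x + Real.cos x = Real.sqrt 2 * Real.sin (x + Real.pi/4) := by
  have h2 : Real.sqrt 2 * Real.sqrt 2 = 2 := Real.mul_self_sqrt (by norm_num)
  rw [Real.sin_add, Real.cos_pi_div_four, Real.sin_pi_div_four]
  linear_combination (-(Real.sin x + Real.cos x)/2) * h2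

lemma sin_sub_cos (x : ℝ) : Real.sin x - Real.cos x = Real.sqrt 2 * Real.sin (x - Real.pi/4) := by
  have h2 : Real.sqrt 2 * Real.sqrt 2 = 2 := Real.mul_self_sqrt (by norm_num)
  rw [Real.sin_sub, Real.cos_pi_div_four, Real.sin_pi_div_four]
  linear_combination (-(Real.sin x - Real.cos x)/2) * h2

lemma sqrt2_pos : (0:ℝ) < Real.sqrt 2 := by positivity

/-- On the open arc (rπ/4, (r+1)π/4), the element W r strictly dominates every other
element of Γ₀. -/
lemma key (x : ℝ) (r : ℕ) (hr : r < 8) (h1 : (r:ℝ) * (Real.pi/4) < x)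
    (h2 : x < ((r:ℝ)+1) * (Real.pi/4)) :
    ∀ γ' ∈ Gamma0, γ' ≠ W r →
      (γ' * Complex.exp (↑x * I)).re < (W r * Complex.exp (↑x * I)).re := by
  have pi_pos := Real.pi_pos
  intro γ' hmem hne
  have hre : ∀ z : ℂ, (z * Complex.exp (↑x * I)).re = z.re * Real.cos x - z.im * Real.sin x := by
    intro z
    rw [Complex.exp_mul_I]
    simp [Complex.mul_re, Complex.add_re, Complex.cos_ofReal_re, Complex.sin_ofReal_re,
      Complex.cos_ofReal_im, Complex.sin_ofReal_im]
  rw [hre, hre]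
  simp only [Gamma0, Finset.mem_insert, Finset.mem_singleton] at hmem
  interval_cases r <;> norm_num at h1 h2
  -- r = 0
  · have hc : 0 < Real.cos x := cos_pos' (by linarith) (by linarith)
    have hs : 0 < Real.sin x := sin_pos' (by linarith) (by linarith)
    rcases hmem with h|h|h|h|h <;> subst h <;>
      first
      | (norm_num [W]; linarith)
      | (exfalso; apply hne; norm_num [W])
  -- r = 1
  · have hc : 0 < Real.cos x := cos_pos' (by linarith) (by linarith)
    have hs : 0 < Real.sin x := sin_pos' (by linarith) (by linarith)
    rcases hmem with h|h|h|h|h <;> subst h <;>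
      first
      | (norm_num [W]; linarith)
      | (exfalso; apply hne; norm_num [W])
  -- r = 2
  · have hc : Real.cos x < 0 := cos_neg' (by linarith) (by linarith)
    have hs : 0 < Real.sin x := sin_pos' (by linarith) (by linarith)
    have hsc : 0 < Real.sin x + Real.cos x := by
      rw [sin_add_cos]
      exact mul_pos sqrt2_pos (sin_pos' (by linarith) (by linarith))
    rcases hmem with h|h|h|h|h <;> subst h <;>
      first
      | (norm_num [W]; linarith)
      | (exfalso; apply hne; norm_num [W])
  -- r = 3
  · have hc : Real.cos x < 0 := cos_neg' (by linarith) (by linarith)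
    have hs : 0 < Real.sin x := sin_pos' (by linarith) (by linarith)
    have hsc : Real.sin x + Real.cos x < 0 := by
      rw [sin_add_cos]
      exact mul_neg_of_pos_of_neg sqrt2_pos (sin_neg' (by linarith) (by linarith))
    rcases hmem with h|h|h|h|h <;> subst h <;>
      first
      | (norm_num [W]; linarith)
      | (exfalso; apply hne; norm_num [W])
  -- r = 4
  · have hc : Real.cos x < 0 := cos_neg' (by linarith) (by linarith)
    have hs : Real.sin x < 0 := sin_neg' (by linarith) (by linarith)
    have hsc : 0 < Real.sin x - Real.cos x := by
      rw [sin_sub_cos]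
      exact mul_pos sqrt2_pos (sin_pos' (by linarith) (by linarith))
    rcases hmem with h|h|h|h|h <;> subst h <;>
      first
      | (norm_num [W]; linarith)
      | (exfalso; apply hne; norm_num [W])
  -- r = 5
  · have hc : Real.cos x < 0 := cos_neg' (by linarith) (by linarith)
    have hs : Real.sin x < 0 := sin_neg' (by linarith) (by linarith)
    have hsc : Real.sin x - Real.cos x < 0 := by
      rw [sin_sub_cos]
      exact mul_neg_of_pos_of_neg sqrt2_pos (sin_neg' (by linarith) (by linarith))
    rcases hmem with h|h|h|h|h <;> subst h <;>
      first
      | (norm_num [W]; linarith)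
      | (exfalso; apply hne; norm_num [W])
  -- r = 6
  · have hc : 0 < Real.cos x := by
      have : 0 < Real.cos (x - 2*Real.pi) := cos_pos' (by linarith) (by linarith)
      rwa [Real.cos_sub_two_pi] at this
    have hs : Real.sin x < 0 := sin_neg' (by linarith) (by linarith)
    rcases hmem with h|h|h|h|h <;> subst h <;>
      first
      | (norm_num [W]; linarith)
      | (exfalso; apply hne; norm_num [W])
  -- r = 7
  · have hc : 0 < Real.cos x := by
      have : 0 < Real.cos (x - 2*Real.pi) := cos_pos' (by linarith) (by linarith)
      rwa [Real.cos_sub_two_pi] at this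
    have hs : Real.sin x < 0 := sin_neg' (by linarith) (by linarith)
    rcases hmem with h|h|h|h|h <;> subst h <;>
      first
      | (norm_num [W]; linarith)
      | (exfalso; apply hne; norm_num [W])

lemma exp_shift (x : ℝ) (q : ℤ) :
    Complex.exp (↑(x + 2*Real.pi*q) * I) = Complex.exp (↑x * I) := by
  push_cast
  rw [add_mul, Complex.exp_add,
    show ((2:ℂ) * Real.pi * q * I) = q * (2 * Real.pi * I) by ring,
    Complex.exp_int_mul_two_pi_mul_I, mul_one]

/-- Any maximizer at a point strictly inside an arc must be the winner of that arc. -/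
lemma unique_max (a : ℝ) (k : ℤ) (h1 : (k:ℝ) < 8*a) (h2 : 8*a < (k:ℝ)+1)
    (γ₀ : ℂ) (hmem : γ₀ ∈ Gamma0)
    (hmax : ∀ γ' ∈ Gamma0, (γ' * Complex.exp (↑(2*Real.pi*a) * I)).re ≤
      (γ₀ * Complex.exp (↑(2*Real.pi*a) * I)).re) :
    γ₀ = W (k % 8).toNat := by
  have pi_pos := Real.pi_pos
  set r : ℕ := (k % 8).toNat with hrdef
  have hk8 : (0:ℤ) ≤ k % 8 := Int.emod_nonneg k (by norm_num)
  have hklt : k % 8 < 8 := Int.emod_lt_of_pos k (by norm_num)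
  have hrlt : r < 8 := by omega
  have hkr : k = 8 * (k/8) + (r : ℤ) := by
    rw [hrdef, Int.toNat_of_nonneg hk8]
    exact (Int.mul_ediv_add_emod k 8).symm
  set q : ℤ := k / 8 with hqdef
  set x : ℝ := 2*Real.pi*a - 2*Real.pi*q with hxdef
  have hexp : Complex.exp (↑(2*Real.pi*a) * I) = Complex.exp (↑x * I) := by
    have : (2*Real.pi*a) = x + 2*Real.pi*q := by ring
    rw [this, exp_shift]
  have hkR : (k:ℝ) = 8*q + r := by exact_mod_cast congrArg (fun z : ℤ => (z:ℝ)) hkr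
  have hb1 : (r:ℝ) * (Real.pi/4) < x := by
    have hra : (r:ℝ) < 8*(a - q) := by rw [hkR] at h1; linarith
    have := mul_lt_mul_of_pos_right hra (by positivity : (0:ℝ) < Real.pi/4)
    calc (r:ℝ) * (Real.pi/4) < 8*(a - q) * (Real.pi/4) := this
      _ = x := by rw [hxdef]; ring
  have hb2 : x < ((r:ℝ)+1) * (Real.pi/4) := by
    have hra : 8*(a - q) < (r:ℝ)+1 := by rw [hkR] at h2; linarith
    have := mul_lt_mul_of_pos_right hra (by positivity : (0:ℝ) < Real.pi/4)
    calc x = 8*(a - q) * (Real.pi/4) := by rw [hxdef]; ring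
      _ < ((r:ℝ)+1) * (Real.pi/4) := this
  by_contra hne
  have hkey := key x r hrlt hb1 hb2 γ₀ hmem hne
  have hle := hmax (W r) (W_mem r)
  rw [hexp] at hle
  linarith

lemma irrational_ne_floor {y : ℝ} (h : Irrational y) : (⌊y⌋ : ℝ) < y ∧ y < ⌊y⌋ + 1 := by
  refine ⟨lt_of_le_of_ne (Int.floor_le y) ?_, Int.lt_floor_add_one y⟩
  intro he
  exact h ⟨⌊y⌋, by push_cast; linarith⟩

/-- If θ is badly approximable with constant κ and m/n is a continued fraction
convergent of θ, then any two distinct n-irregular indices j, j' satisfy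
|j − j'| > κn/128. -/
theorem irregular_indices_separated (θ : ℝ) (hθ : θ ∈ Set.Ioo (0 : ℝ) 1)
    (hirr : Irrational θ) (κ : ℝ) (hκ : 0 < κ)
    (hbad : ∀ (m : ℤ) (q : ℕ), 0 < q → κ / q ≤ |(q : ℝ) * θ - m|)
    (m : ℤ) (n : ℕ) (hn : 0 < n) (hcop : Int.gcd m n = 1)
    (hconv : |(n : ℝ) * θ - m| < 1 / n)
    (γ : ℕ → ℂ) (hγ : IsGammaSeq θ γ) :
    ∀ j j' : ℕ, n < j → n < j' → γ j ≠ γ (j - n) → γ j' ≠ γ (j' - n) → j ≠ j' →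
      κ * n / 128 < |(j : ℝ) - j'| := by
  have hnR : (0:ℝ) < n := by exact_mod_cast hn
  -- Step 1: every irregular index is close to a multiple of 1/8 (scaled by 8).
  have near : ∀ j : ℕ, n < j → γ j ≠ γ (j - n) → ∃ k : ℤ, |8*((j:ℝ)*θ) - k| < 8/n := by
    intro j hj hirrj
    have hj1 : 1 ≤ j := by omega
    have hjn1 : 1 ≤ j - n := by omega
    have hcast : ((j - n : ℕ):ℝ) = (j:ℝ) - n := by
      push_cast [Nat.cast_sub hj.le]; ring
    set a : ℝ := (j:ℝ)*θ with hadef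
    set b : ℝ := ((j:ℝ) - n)*θ + m with hbdef
    have habs : |b - a| < 1/n := by
      have hab : b - a = -((n:ℝ)*θ - m) := by rw [hadef, hbdef]; ring
      rw [hab, abs_neg]; exact hconv
    obtain ⟨hmem_j, hmax_j⟩ := hγ j hj1
    obtain ⟨hmem_jn, hmax_jn⟩ := hγ (j-n) hjn1
    have e1 : Complex.exp (2 * (Real.pi:ℂ) * (θ:ℂ) * (j:ℂ) * I)
        = Complex.exp (↑(2*Real.pi*a) * I) := by
      congr 1
      push_cast [hadef]
      ring
    have e2 : Complex.exp (2 * (Real.pi:ℂ) * (θ:ℂ) * ((j - n : ℕ):ℂ) * I)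
        = Complex.exp (↑(2*Real.pi*b) * I) := by
      have hb' : 2*Real.pi*b = 2*Real.pi*(((j - n : ℕ):ℝ)*θ) + 2*Real.pi*(m:ℤ) := by
        rw [hbdef, hcast]; ring
      rw [hb', exp_shift]
      congr 1
      push_cast
      ring
    have hmax_j' : ∀ γ' ∈ Gamma0, (γ' * Complex.exp (↑(2*Real.pi*a) * I)).re ≤
        (γ j * Complex.exp (↑(2*Real.pi*a) * I)).re := by
      intro γ' hγ'
      have := hmax_j γ' hγ'
      rwa [e1] at this
    have hmax_jn' : ∀ γ' ∈ Gamma0, (γ' * Complex.exp (↑(2*Real.pi*b) * I)).re ≤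
        (γ (j-n) * Complex.exp (↑(2*Real.pi*b) * I)).re := by
      intro γ' hγ'
      have := hmax_jn γ' hγ'
      rwa [e2] at this
    have hia : Irrational (8*a) := by
      have h8j : Irrational (((8*j:ℕ):ℝ) * θ) := irrational_natCast_mul_iff.2 ⟨by omega, hirr⟩
      have he : (8:ℝ)*a = ((8*j:ℕ):ℝ)*θ := by rw [hadef]; push_cast; ring
      rwa [he]
    have hib : Irrational (8*b) := by
      have h8j : Irrational (((8*(j-n):ℕ):ℝ) * θ) := irrational_natCast_mul_iff.2 ⟨by omega, hirr⟩
      have h2 : Irrational (((8*(j-n):ℕ):ℝ) * θ + ((8*m : ℤ):ℝ)) := irrational_add_intCast_iff.2 h8j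
      have he : (8:ℝ)*b = ((8*(j-n):ℕ):ℝ)*θ + ((8*m:ℤ):ℝ) := by
        rw [hbdef]
        push_cast [Nat.cast_sub hj.le]
        ring
      rwa [he]
    obtain ⟨hfa1, hfa2⟩ := irrational_ne_floor hia
    obtain ⟨hfb1, hfb2⟩ := irrational_ne_floor hib
    have hne_floor : ⌊8*a⌋ ≠ ⌊8*b⌋ := by
      intro hfl
      apply hirrj
      have ga : γ j = W ((⌊8*a⌋ % 8).toNat) :=
        unique_max a ⌊8*a⌋ hfa1 hfa2 (γ j) hmem_j hmax_j'
      have gb : γ (j-n) = W ((⌊8*b⌋ % 8).toNat) :=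
        unique_max b ⌊8*b⌋ hfb1 hfb2 (γ (j-n)) hmem_jn hmax_jn'
      rw [ga, gb, hfl]
    have h8n : (0:ℝ) < 8/n := by positivity
    have h8n' : (8:ℝ)/n = 8*(1/n) := by ring
    obtain ⟨habs1, habs2⟩ := abs_lt.1 habs
    rcases le_or_gt a b with hle | hlt
    · refine ⟨⌊8*b⌋, ?_⟩
      have h1 : ⌊8*a⌋ < ⌊8*b⌋ :=
        lt_of_le_of_ne (Int.floor_le_floor (by linarith)) hne_floor
      have h2 : ((⌊8*a⌋:ℝ)+1) ≤ (⌊8*b⌋:ℝ) := by exact_mod_cast Int.add_one_le_iff.2 h1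
      have h3 : (⌊8*b⌋:ℝ) ≤ 8*b := Int.floor_le _
      rw [abs_lt]
      constructor <;> linarith
    · refine ⟨⌊8*a⌋, ?_⟩
      have h1 : ⌊8*b⌋ < ⌊8*a⌋ :=
        lt_of_le_of_ne (Int.floor_le_floor (by linarith)) (Ne.symm hne_floor)
      have h2 : ((⌊8*b⌋:ℝ)+1) ≤ (⌊8*a⌋:ℝ) := by exact_mod_cast Int.add_one_le_iff.2 h1
      have h3 : (⌊8*a⌋:ℝ) ≤ 8*a := Int.floor_le _
      rw [abs_lt]
      constructor <;> linarith
  -- Step 2: combine two near-multiples via bad approximability.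
  have main : ∀ (p q : ℕ) (kp kq : ℤ), q < p → |8*((p:ℝ)*θ) - kp| < 8/n →
      |8*((q:ℝ)*θ) - kq| < 8/n → κ * n / 128 < (p:ℝ) - q := by
    intro p q kp kq hpq hp hq
    have hbad' := hbad (kp - kq) (8*(p-q)) (by omega)
    have hcast : ((8*(p-q):ℕ):ℝ) = 8*((p:ℝ) - q) := by
      push_cast [Nat.cast_sub hpq.le]; ring
    have hqR : (q:ℝ) < p := by exact_mod_cast hpq
    have hdist : |((8*(p-q):ℕ):ℝ)*θ - ((kp - kq : ℤ):ℝ)| < 16/n := by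
      rw [hcast]
      have e : 8*((p:ℝ)-q)*θ - ((kp - kq:ℤ):ℝ)
          = (8*((p:ℝ)*θ) - kp) - (8*((q:ℝ)*θ) - kq) := by push_cast; ring
      rw [e]
      calc |(8*((p:ℝ)*θ) - kp) - (8*((q:ℝ)*θ) - kq)|
          ≤ |8*((p:ℝ)*θ) - kp| + |8*((q:ℝ)*θ) - kq| := abs_sub _ _
        _ < 8/n + 8/n := add_lt_add hp hq
        _ = 16/n := by ring
    have hq8 : (0:ℝ) < ((8*(p-q):ℕ):ℝ) := by rw [hcast]; linarith
    have hlt : κ / ((8*(p-q):ℕ):ℝ) < 16/n := lt_of_le_of_lt hbad' hdist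
    rw [div_lt_div_iff₀ hq8 hnR, hcast] at hlt
    linarith
  intro j j' hj hj' hij hij' hne
  obtain ⟨k, hk⟩ := near j hj hij
  obtain ⟨k', hk'⟩ := near j' hj' hij'
  rcases lt_or_gt_of_ne hne with h | h
  · have hlt : (j:ℝ) < j' := by exact_mod_cast h
    rw [abs_of_neg (by linarith)]
    have := main j' j k' k h hk' hk
    linarith
  · have hlt : (j':ℝ) < j := by exact_mod_cast h
    rw [abs_of_pos (by linarith)]
    exact main j j' k k' h hk hk'
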